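/- If S is a strong geodetic set of G □ H with a choice of shortest paths g̃, then the projection p_G(S) of S onto G is a geodetic set of G, i.e., every vertex of G lies on some shortest path between two vertices of p_G(S). -/

import Mathlib

open SimpleGraph

/-- A choice of one fixed shortest path (geodesic) between each pair of vertices,
symmetric in the sense that the path from `v` to `u` is the reverse of the one
from `u` to `v`. -/
def StrongGeodeticChoice {V : Type*} (G : SimpleGraph V) (p : ∀ u v : V, G.Walk u v) : Prop :=
  ∀ u v : V, (p u v).IsPath ∧ (p u v).length = G.dist u v ∧ p v u = (p u v).reverse

/-- `S` is a strong geodetic set of `G`: one can fix one shortest path between each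
pair of vertices of `S` so that every vertex of `G` lies on some fixed path. -/
def IsStrongGeodeticSet {V : Type*} (G : SimpleGraph V) (S : Set V) : Prop :=
  ∃ p : ∀ u v : V, G.Walk u v, StrongGeodeticChoice G p ∧
    ∀ w : V, ∃ u ∈ S, ∃ v ∈ S, w ∈ (p u v).support

/-- The strong geodetic number of `G`. -/
noncomputable def sg {V : Type*} (G : SimpleGraph V) : ℕ :=
  sInf {n | ∃ S : Set V, S.ncard = n ∧ IsStrongGeodeticSet G S}

/-- The strong geodetic core number of `G`: the minimum, over minimum strong
geodetic sets `S` together with a choice of fixed geodesics witnessing them,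
of the size of a subset `X ⊆ S` such that the fixed paths with an endpoint in `X`
already cover all vertices. -/
noncomputable def sgc {V : Type*} (G : SimpleGraph V) : ℕ :=
  sInf {k | ∃ (S X : Set V) (p : ∀ u v : V, G.Walk u v),
    StrongGeodeticChoice G p ∧ S.ncard = sg G ∧
    (∀ w : V, ∃ u ∈ S, ∃ v ∈ S, w ∈ (p u v).support) ∧
    X ⊆ S ∧ X.ncard = k ∧
    (∀ w : V, ∃ u ∈ X, ∃ v ∈ S, w ∈ (p u v).support)}

/-- `A` is a geodetic set: every vertex lies on some shortest path between two
vertices of `A`. -/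
def IsGeodeticSet {V : Type*} (G : SimpleGraph V) (A : Set V) : Prop :=
  ∀ w : V, ∃ u ∈ A, ∃ v ∈ A, ∃ q : G.Walk u v, q.length = G.dist u v ∧ w ∈ q.support

/-- The geodetic number of `G`. -/
noncomputable def geodeticNumber {V : Type*} (G : SimpleGraph V) : ℕ :=
  sInf {n | ∃ A : Set V, A.ncard = n ∧ IsGeodeticSet G A}


lemma length_ofBoxProd {V W : Type*} {G : SimpleGraph V} {H : SimpleGraph W}
    [DecidableEq V] [DecidableEq W] [DecidableRel G.Adj] [DecidableRel H.Adj]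
    {x y : V × W} (q : (G □ H).Walk x y) :
    q.ofBoxProdLeft.length + q.ofBoxProdRight.length = q.length := by
  induction q with
  | nil => simp [Walk.ofBoxProdLeft, Walk.ofBoxProdRight]
  | @cons x y z h q ih =>
    obtain ⟨a₁, b₁⟩ := x
    obtain ⟨a₂, b₂⟩ := y
    by_cases hc : G.Adj a₁ a₂ ∧ b₁ = b₂
    · obtain ⟨hadj, rfl⟩ := hc
      have hnc : ¬ (H.Adj b₁ b₁ ∧ a₁ = a₂) := by simp
      rw [Walk.ofBoxProdLeft, Walk.ofBoxProdRight]
      unfold Or.by_cases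
      rw [dif_pos ⟨hadj, rfl⟩, dif_neg hnc]
      simp only [Walk.length_cons]
      omega
    · have hd : H.Adj b₁ b₂ ∧ a₁ = a₂ := h.resolve_left hc
      obtain ⟨hadj, rfl⟩ := hd
      have hnc : ¬ (G.Adj a₁ a₁ ∧ b₁ = b₂) := by simp
      rw [Walk.ofBoxProdLeft, Walk.ofBoxProdRight]
      unfold Or.by_cases
      rw [dif_neg hnc, dif_pos ⟨hadj, rfl⟩]
      simp only [Walk.length_cons]
      omega

theorem stmt12 {V W : Type*} [Fintype V] [Fintype W]
    (G : SimpleGraph V) (H : SimpleGraph W) (hG : G.Connected) (hH : H.Connected)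
    (S : Set (V × W)) (hS : IsStrongGeodeticSet (G □ H) S) :
    IsGeodeticSet G (Prod.fst '' S) := by
  classical
  obtain ⟨p, hchoice, hcover⟩ := hS
  intro w0
  obtain ⟨w'⟩ := hH.nonempty
  obtain ⟨u, hu, v, hv, hmem⟩ := hcover (w0, w')
  set q := p u v with hq
  have hqlen : q.length = (G □ H).dist u v := (hchoice u v).2.1
  obtain ⟨rG, hrG⟩ := (hG.preconnected u.1 v.1).exists_walk_length_eq_dist
  obtain ⟨rH, hrH⟩ := (hH.preconnected u.2 v.2).exists_walk_length_eq_dist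
  have hqle : q.length ≤ G.dist u.1 v.1 + H.dist u.2 v.2 := by
    have hd := SimpleGraph.dist_le ((rG.boxProdLeft H u.2).append (Walk.boxProdRight G v.1 rH))
    rw [hqlen]
    calc (G □ H).dist u v ≤ _ := hd
    _ = G.dist u.1 v.1 + H.dist u.2 v.2 := by
        have e1 : (rG.boxProdLeft H u.2).length = rG.length := Walk.length_map ..
        have e2 : (Walk.boxProdRight G v.1 rH).length = rH.length := Walk.length_map ..
        simp [Walk.length_append, e1, e2, hrG, hrH]
  set q1 := q.takeUntil _ hmem with hq1
  set q2 := q.dropUntil _ hmem with hq2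
  have hsplit : q1.length + q2.length = q.length := by
    rw [← Walk.length_append, Walk.take_spec]
  set r : G.Walk u.1 v.1 := q1.ofBoxProdLeft.append q2.ofBoxProdLeft with hr
  set s : H.Walk u.2 v.2 := q1.ofBoxProdRight.append q2.ofBoxProdRight with hs
  have hrs : r.length + s.length = q.length := by
    have h1 := length_ofBoxProd q1
    have h2 := length_ofBoxProd q2
    simp only [hr, hs, Walk.length_append]
    omega
  have h1 : G.dist u.1 v.1 ≤ r.length := SimpleGraph.dist_le r
  have h2 : H.dist u.2 v.2 ≤ s.length := SimpleGraph.dist_le s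
  have hrlen : r.length = G.dist u.1 v.1 := by omega
  refine ⟨u.1, ⟨u, hu, rfl⟩, v.1, ⟨v, hv, rfl⟩, r, hrlen, ?_⟩
  exact (Walk.mem_support_append_iff _ _).2 (Or.inr (Walk.start_mem_support q2.ofBoxProdLeft))
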